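/- Let n ≥ 1 and let (r_1, ..., r_{n+1}) be an exchangeable random vector of real random variables whose coordinates are almost surely pairwise distinct. Let α ∈ (1/(n+1), 1) and let k = ⌈(1 − α)(n + 1)⌉. Then P(r_{n+1} ≤ r_{(k)}) = ⌈(1 − α)(n + 1)⌉ / (n + 1); in particular 1 − α ≤ P(r_{n+1} ≤ r_{(k)}) ≤ 1 − α + 1/(n + 1), where r_{(k)} denotes the k-th smallest value among r_1, ..., r_n. -/

import Mathlib

open MeasureTheory

open scoped ENNReal


lemma sorted_mono (L : List ℝ) (hs : L.Pairwise (· ≤ ·)) {i j : ℕ} (hij : i ≤ j)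
    (hj : j < L.length) : L[i]'(lt_of_le_of_lt hij hj) ≤ L[j] :=
  hs.rel_get_of_le (a := ⟨i, lt_of_le_of_lt hij hj⟩) (b := ⟨j, hj⟩) hij

lemma list_lemma (L : List ℝ) (x : ℝ) (k : ℕ) (hs : L.Pairwise (· ≤ ·))
    (hk1 : 1 ≤ k) (hk2 : k ≤ L.length) :
    x ≤ L.getD (k-1) 0 ↔ (L.filter (fun b => b < x)).length < k := by
  have hkl : k - 1 < L.length := by omega
  rw [List.getD_eq_getElem _ _ hkl]
  constructor
  · intro h
    have hdrop : (L.drop (k-1)).filter (fun b => b < x) = [] := by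
      rw [List.filter_eq_nil_iff]
      intro b hb
      obtain ⟨i, hi, rfl⟩ := List.mem_iff_getElem.mp hb
      simp only [List.length_drop] at hi; rw [List.getElem_drop]
      simp only [decide_eq_true_eq, not_lt]
      exact h.trans (sorted_mono L hs (Nat.le_add_right _ _) (by omega))
    have : L.filter (fun b => b < x) = (L.take (k-1)).filter (fun b => b < x) := by
      conv_lhs => rw [← List.take_append_drop (k-1) L]
      rw [List.filter_append, hdrop, List.append_nil]
    rw [this]
    calc ((L.take (k-1)).filter _).length ≤ (L.take (k-1)).length :=
        List.length_filter_le _ _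
      _ ≤ k - 1 := by simp [List.length_take]
      _ < k := by omega
  · intro h
    by_contra hlt
    push_neg at hlt
    have htake : (L.take k).filter (fun b => b < x) = L.take k := by
      rw [List.filter_eq_self]
      intro b hb
      obtain ⟨i, hi, rfl⟩ := List.mem_iff_getElem.mp hb
      simp only [List.length_take] at hi
      rw [List.getElem_take]
      simp only [decide_eq_true_eq]
      calc L[i]'(by omega) ≤ L[k-1] := sorted_mono L hs (by omega) hkl
        _ < x := hlt
    have : k ≤ (L.filter (fun b => b < x)).length := by
      calc k = (L.take k).length := by simp [List.length_take]; omega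
        _ = ((L.take k).filter (fun b => b < x)).length := by rw [htake]
        _ ≤ (L.filter (fun b => b < x)).length :=
            ((List.take_sublist k L).filter _).length_le
    omega

/-- The `k`-th smallest value (1-indexed) among `v 0, ..., v (n-1)`. -/
noncomputable def kthSmallest {n : ℕ} (k : ℕ) (v : Fin n → ℝ) : ℝ :=
  (Multiset.sort (Multiset.map v Finset.univ.val) (· ≤ ·)).getD (k - 1) 0


lemma kth_iff {n : ℕ} (k : ℕ) (w : Fin n → ℝ) (x : ℝ) (hk1 : 1 ≤ k) (hk2 : k ≤ n) :
    x ≤ kthSmallest k w ↔ (Finset.univ.filter (fun j => w j < x)).card < k := by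
  set L := Multiset.sort (Multiset.map w Finset.univ.val) (· ≤ ·) with hL
  have hsort : L.Pairwise (· ≤ ·) := Multiset.pairwise_sort _ _
  have hlen : L.length = n := by
    rw [hL, Multiset.length_sort, Multiset.card_map]
    simp
  have hcount : (L.filter (fun b => b < x)).length
      = (Finset.univ.filter (fun j => w j < x)).card := by
    have h1 : ((L.filter (fun b => b < x) : List ℝ) : Multiset ℝ)
        = Multiset.filter (fun b => b < x) (Multiset.map w Finset.univ.val) := by
      rw [← Multiset.filter_coe]
      congr 1
      exact Multiset.sort_eq _ _
    have h2 : Multiset.filter (fun b => b < x) (Multiset.map w Finset.univ.val)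
        = Multiset.map w ((Finset.univ.filter (fun j => w j < x)).val) := by
      rw [Multiset.filter_map, Finset.filter_val]
      rfl
    have := congrArg Multiset.card (h1.trans h2)
    simpa [Finset.card] using this
  rw [kthSmallest, ← hL, ← hcount]
  exact list_lemma L x k hsort hk1 (by omega)

lemma count_lemma {m : ℕ} (v : Fin m → ℝ) (hv : ∀ i j : Fin m, i ≠ j → v i ≠ v j)
    (k : ℕ) (hk : k ≤ m) :
    (Finset.univ.filter
      (fun i => (Finset.univ.filter (fun j => v j < v i)).card < k)).card = k := by
  set g : Fin m → ℕ := fun i => (Finset.univ.filter (fun j => v j < v i)).card with hg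
  have hmono : ∀ i i' : Fin m, v i < v i' → g i < g i' := by
    intro i i' hlt
    apply Finset.card_lt_card
    constructor
    · intro j hj
      simp only [Finset.mem_filter, Finset.mem_univ, true_and] at hj ⊢
      exact hj.trans hlt
    · intro hsub
      have : i ∈ Finset.univ.filter (fun j => v j < v i') := by
        simp [hlt]
      simpa using hsub this
  have hinj : Function.Injective g := by
    intro i i' h
    by_contra hne
    rcases lt_trichotomy (v i) (v i') with h'|h'|h'
    · exact absurd h (Nat.ne_of_lt (hmono _ _ h'))
    · exact hv i i' hne h'
    · exact absurd h.symm (Nat.ne_of_lt (hmono _ _ h'))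
  have hbound : ∀ i, g i < m := by
    intro i
    have : Finset.univ.filter (fun j => v j < v i) ⊆ Finset.univ.erase i := by
      intro j hj
      simp only [Finset.mem_filter, Finset.mem_univ, true_and] at hj
      simp only [Finset.mem_erase, Finset.mem_univ, and_true]
      rintro rfl
      exact lt_irrefl _ hj
    calc g i ≤ (Finset.univ.erase i).card := Finset.card_le_card this
      _ = m - 1 := by simp
      _ < m := by have := i.pos; omega
  have himg : Finset.univ.image g = Finset.range m := by
    apply Finset.eq_of_subset_of_card_le
    · intro a ha
      simp only [Finset.mem_image] at ha
      obtain ⟨i, _, rfl⟩ := ha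
      exact Finset.mem_range.mpr (hbound i)
    · rw [Finset.card_range, Finset.card_image_of_injective _ hinj]
      simp
  have key : (Finset.univ.filter (fun i => g i < k)).card
      = ((Finset.univ.image g).filter (fun a => a < k)).card := by
    rw [Finset.filter_image, Finset.card_image_of_injective _ hinj]
  simp only [hg] at key
  rw [key, himg]
  have : (Finset.range m).filter (fun a => a < k) = Finset.range k := by
    ext a
    simp only [Finset.mem_filter, Finset.mem_range]
    omega
  rw [this, Finset.card_range]


/-- Let `(r 0, ..., r n)` be an exchangeable random vector of `n+1` real
random variables whose coordinates are a.s. pairwise distinct, `α ∈ (1/(n+1), 1)` and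
`k = ⌈(1 − α)(n + 1)⌉`. Then `P(r (last) ≤ r_(k)) = ⌈(1 − α)(n + 1)⌉/(n + 1)`; in particular
`1 − α ≤ P(r (last) ≤ r_(k)) ≤ 1 − α + 1/(n + 1)`, where `r_(k)` is the `k`-th smallest
among the first `n` coordinates. -/
theorem stmt13 {Ω : Type*} [MeasurableSpace Ω] (P : Measure Ω) [IsProbabilityMeasure P]
    (n : ℕ) (hn : 1 ≤ n) (r : Fin (n+1) → Ω → ℝ)
    (hmeas : ∀ i, Measurable (r i))
    (hexch : ∀ σ : Equiv.Perm (Fin (n+1)),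
      P.map (fun ω => fun i => r (σ i) ω) = P.map (fun ω => fun i => r i ω))
    (hdist : ∀ᵐ ω ∂P, ∀ i j : Fin (n+1), i ≠ j → r i ω ≠ r j ω)
    (α : ℝ) (hα : α ∈ Set.Ioo (1/((n:ℝ)+1)) 1) :
    (P {ω | r (Fin.last n) ω ≤
        kthSmallest ⌈(1 - α) * ((n:ℝ)+1)⌉₊ (fun i : Fin n => r i.castSucc ω)}).toReal
      = (⌈(1 - α) * ((n:ℝ)+1)⌉₊ : ℝ) / ((n:ℝ)+1) ∧
    1 - α ≤
      (P {ω | r (Fin.last n) ω ≤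
        kthSmallest ⌈(1 - α) * ((n:ℝ)+1)⌉₊ (fun i : Fin n => r i.castSucc ω)}).toReal ∧
    (P {ω | r (Fin.last n) ω ≤
        kthSmallest ⌈(1 - α) * ((n:ℝ)+1)⌉₊ (fun i : Fin n => r i.castSucc ω)}).toReal
      ≤ 1 - α + 1/((n:ℝ)+1) := by
  obtain ⟨hα1, hα2⟩ := hα
  have hnpos : (0:ℝ) < (n:ℝ)+1 := by positivity
  rw [div_lt_iff₀ hnpos] at hα1
  set k := ⌈(1 - α) * ((n:ℝ)+1)⌉₊ with hkdef
  have hxpos : 0 < (1 - α) * ((n:ℝ)+1) := by nlinarith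
  have hk1 : 1 ≤ k := Nat.one_le_iff_ne_zero.mpr (Nat.ceil_pos.mpr hxpos).ne'
  have hkn : k ≤ n := by
    rw [hkdef, Nat.ceil_le]
    nlinarith
  have hkle : ((1 - α) * ((n:ℝ)+1)) ≤ (k:ℝ) := Nat.le_ceil _
  have hklt : (k:ℝ) < (1 - α) * ((n:ℝ)+1) + 1 := Nat.ceil_lt_add_one hxpos.le
  -- joint law
  set X : Ω → (Fin (n+1) → ℝ) := fun ω i => r i ω with hX
  have hXm : Measurable X := measurable_pi_lambda _ hmeas
  set μ := P.map X with hμ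
  have hμprob : IsProbabilityMeasure μ := Measure.isProbabilityMeasure_map hXm.aemeasurable
  -- the sets B i
  have hgm : ∀ i : Fin (n+1),
      Measurable (fun v : Fin (n+1) → ℝ => (Finset.univ.filter (fun j => v j < v i)).card) := by
    intro i
    simp only [Finset.card_filter]
    exact Finset.measurable_sum _ (fun j _ => Measurable.ite
      (measurableSet_lt (measurable_pi_apply j) (measurable_pi_apply i))
      measurable_const measurable_const)
  set B : Fin (n+1) → Set (Fin (n+1) → ℝ) :=
    fun i => {v | (Finset.univ.filter (fun j => v j < v i)).card < k} with hB
  have hBm : ∀ i, MeasurableSet (B i) := by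
    intro i
    exact measurableSet_lt (hgm i) measurable_const
  -- exchangeability
  have hμswap : ∀ i : Fin (n+1), μ (B i) = μ (B (Fin.last n)) := by
    intro i
    set σ := Equiv.swap i (Fin.last n) with hσ
    have hcm : Measurable (fun v : Fin (n+1) → ℝ => v ∘ σ) :=
      measurable_pi_lambda _ (fun j => measurable_pi_apply (σ j))
    have hmap : μ.map (fun v => v ∘ σ) = μ := by
      rw [hμ, Measure.map_map hcm hXm]
      exact hexch σ
    have hpre : (fun v : Fin (n+1) → ℝ => v ∘ σ) ⁻¹' (B (Fin.last n)) = B i := by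
      ext v
      simp only [Set.mem_preimage, hB, Set.mem_setOf_eq, Function.comp]
      have hσlast : σ (Fin.last n) = i := Equiv.swap_apply_right _ _
      simp only [hσlast, Finset.card_filter]
      rw [Equiv.sum_comp σ (fun j => if v j < v i then (1:ℕ) else 0)]
    rw [← hpre, ← Measure.map_apply hcm (hBm _), hmap]
  -- distinctness set
  set D : Set (Fin (n+1) → ℝ) := {v | ∀ i j : Fin (n+1), i ≠ j → v i ≠ v j} with hD
  have hDm : MeasurableSet D := by
    have : D = ⋂ (i : Fin (n+1)) (j : Fin (n+1)) (_ : i ≠ j), {v | v i ≠ v j} := by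
      ext v; simp [hD]
    rw [this]
    refine MeasurableSet.iInter fun i => MeasurableSet.iInter fun j =>
      MeasurableSet.iInter fun _ => ?_
    exact (measurableSet_eq_fun (measurable_pi_apply i) (measurable_pi_apply j)).compl
  have hDfull : μ D = 1 := by
    rw [hμ, Measure.map_apply hXm hDm]
    rw [← prob_compl_eq_zero_iff (hXm hDm)]
    have h0 : P {ω | ¬ ∀ i j : Fin (n+1), i ≠ j → r i ω ≠ r j ω} = 0 :=
      MeasureTheory.ae_iff.mp hdist
    convert h0 using 2
    rfl
  -- sum of measures
  have hsum : ∑ i : Fin (n+1), μ (B i) = (k : ℝ≥0∞) := by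
    have h1 : ∀ i : Fin (n+1), μ (B i) = ∫⁻ v, (B i).indicator 1 v ∂μ := by
      intro i
      rw [lintegral_indicator_one (hBm i)]
    have h2 : ∀ᵐ v ∂μ, (∑ i : Fin (n+1), (B i).indicator 1 v) = (k : ℝ≥0∞) := by
      have hDae : ∀ᵐ v ∂μ, v ∈ D := by
        rw [← prob_compl_eq_zero_iff hDm] at hDfull
        exact (MeasureTheory.ae_iff).mpr hDfull
      filter_upwards [hDae] with v hv
      have : ∀ i : Fin (n+1), (B i).indicator (1 : (Fin (n+1) → ℝ) → ℝ≥0∞) v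
          = if ((Finset.univ.filter (fun j => v j < v i)).card < k) then 1 else 0 := by
        intro i
        simp [Set.indicator_apply, hB]
      rw [Finset.sum_congr rfl (fun i _ => this i), Finset.sum_boole]
      rw [count_lemma v (fun i j h => hv i j h) k (by omega)]
    calc ∑ i : Fin (n+1), μ (B i)
        = ∑ i : Fin (n+1), ∫⁻ v, (B i).indicator 1 v ∂μ :=
          Finset.sum_congr rfl (fun i _ => h1 i)
      _ = ∫⁻ v, ∑ i : Fin (n+1), (B i).indicator 1 v ∂μ :=
          (lintegral_finset_sum _ (fun i _ => measurable_const.indicator (hBm i))).symm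
      _ = ∫⁻ _, (k:ℝ≥0∞) ∂μ := lintegral_congr_ae h2
      _ = (k:ℝ≥0∞) := by simp
  have hcard : ((n:ℝ≥0∞)+1) ≠ 0 := by simp
  have hcardtop : ((n:ℝ≥0∞)+1) ≠ ⊤ := by simp
  have hBlast : μ (B (Fin.last n)) = (k : ℝ≥0∞) / ((n:ℝ≥0∞)+1) := by
    have h3 : ∑ i : Fin (n+1), μ (B i) = ((n:ℝ≥0∞)+1) * μ (B (Fin.last n)) := by
      rw [Finset.sum_congr rfl (fun i _ => hμswap i), Finset.sum_const, Finset.card_univ,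
        Fintype.card_fin]
      simp [nsmul_eq_mul]
    rw [h3] at hsum
    rw [ENNReal.eq_div_iff hcard hcardtop, hsum]
  -- transfer to the event
  have hev : P {ω | r (Fin.last n) ω ≤
      kthSmallest k (fun i : Fin n => r i.castSucc ω)} = μ (B (Fin.last n)) := by
    rw [hμ, Measure.map_apply hXm (hBm _)]
    apply measure_congr
    apply Filter.eventuallyEq_set.mpr
    filter_upwards [hdist] with ω hω
    simp only [Set.mem_setOf_eq, Set.mem_preimage, hB, hX]
    rw [kth_iff k _ _ hk1 hkn]
    have : (Finset.univ.filter (fun j : Fin (n+1) => r j ω < r (Fin.last n) ω)).card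
        = (Finset.univ.filter (fun j : Fin n => r j.castSucc ω < r (Fin.last n) ω)).card := by
      simp only [Finset.card_filter]
      rw [Fin.sum_univ_castSucc]
      simp
    rw [this]
  rw [hev, hBlast]
  have htr : ((k : ℝ≥0∞) / ((n:ℝ≥0∞)+1)).toReal = (k:ℝ) / ((n:ℝ)+1) := by
    have hc : ((n:ℝ≥0∞)+1) = ((n+1:ℕ):ℝ≥0∞) := by push_cast; ring
    rw [hc, ENNReal.toReal_div, ENNReal.toReal_natCast, ENNReal.toReal_natCast]
    push_cast
    ring
  rw [htr]
  refine ⟨rfl, ?_, ?_⟩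
  · rw [le_div_iff₀ hnpos]; linarith
  · rw [div_le_iff₀ hnpos]
    have h4 : (1/((n:ℝ)+1)) * ((n:ℝ)+1) = 1 := by field_simp
    nlinarith [hklt]
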